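/- Let Θ₀ < λ ≤ 1 and suppose the map (z,φ) ↦ F_{z,λ}(φ) on ℝ × B¹(ℝ⁺) attains its global minimum at (ζ, f) with f nonnegative. If ν ∈ ℝ satisfies λ₂(ν) > λ + (ν−ζ)², then λ₁(ν) ≥ λ + (ν−ζ)²·[1 − 4‖(t−ζ)f‖₂² / ((λ₂(ν) − λ − (ν−ζ)²)·‖f‖₂²)], where ‖(t−ζ)f‖₂ is the L²((0,∞)) norm of t ↦ (t−ζ)f(t). -/

import Mathlib

open MeasureTheory Set Real Filter

noncomputable section

/-- Membership in the space `B¹(ℝ⁺)`: square integrable on `(0,∞)`, with square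
integrable derivative and such that `t ↦ t·φ(t)` is square integrable. -/
def MemB1 (φ : ℝ → ℝ) : Prop :=
  ContinuousWithinAt φ (Ici 0) 0 ∧
  (∀ t ∈ Ioi (0:ℝ), DifferentiableAt ℝ φ t) ∧
  IntegrableOn (fun t => (φ t) ^ 2) (Ioi 0) ∧
  IntegrableOn (fun t => (deriv φ t) ^ 2) (Ioi 0) ∧
  IntegrableOn (fun t => (t * φ t) ^ 2) (Ioi 0)

/-- The Rayleigh quotient of the de Gennes operator `-d²/dt² + (t-ξ)²`
(Neumann realization on `L²((0,∞))`). -/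
def RQ (ξ : ℝ) (φ : ℝ → ℝ) : ℝ :=
  (∫ t in Ioi (0:ℝ), ((deriv φ t) ^ 2 + (t - ξ) ^ 2 * (φ t) ^ 2)) /
  (∫ t in Ioi (0:ℝ), (φ t) ^ 2)

/-- The ground state energy `μ₁(ξ)` of the de Gennes operator. -/
def mu1 (ξ : ℝ) : ℝ :=
  sInf {r | ∃ φ, MemB1 φ ∧ (0 < ∫ t in Ioi (0:ℝ), (φ t) ^ 2) ∧ r = RQ ξ φ}

/-- `Θ₀ = inf_ξ μ₁(ξ)`. -/
def Theta0 : ℝ := sInf (Set.range mu1)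

/-- The Ginzburg–Landau type functional `F_{z,λ}`. -/
def GLF (z lam : ℝ) (φ : ℝ → ℝ) : ℝ :=
  ∫ t in Ioi (0:ℝ),
    ((deriv φ t) ^ 2 + (t - z) ^ 2 * (φ t) ^ 2 + lam / 2 * (φ t) ^ 4 - lam * (φ t) ^ 2)

/-- `f` minimizes `F_{z,λ}` over `B¹(ℝ⁺)`. -/
def IsMinimizer (z lam : ℝ) (f : ℝ → ℝ) : Prop :=
  MemB1 f ∧ ∀ φ, MemB1 φ → GLF z lam f ≤ GLF z lam φ

/-- `(ζ, f)` is a global minimum of the map `(z, φ) ↦ F_{z,λ}(φ)` on `ℝ × B¹(ℝ⁺)`. -/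
def IsGlobalMin (lam ζ : ℝ) (f : ℝ → ℝ) : Prop :=
  MemB1 f ∧ ∀ z : ℝ, ∀ φ, MemB1 φ → GLF ζ lam f ≤ GLF z lam φ

/-- Rayleigh quotient of the operator `-d²/dt² + (t-ν)² + λ f(t)²`. -/
def RQf (lam : ℝ) (f : ℝ → ℝ) (ν : ℝ) (φ : ℝ → ℝ) : ℝ :=
  (∫ t in Ioi (0:ℝ),
    ((deriv φ t) ^ 2 + (t - ν) ^ 2 * (φ t) ^ 2 + lam * (f t) ^ 2 * (φ t) ^ 2)) /
  (∫ t in Ioi (0:ℝ), (φ t) ^ 2)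

/-- Ground state energy `λ₁(ν)` of the Neumann realization of
`-d²/dt² + (t-ν)² + λ f(t)²` on `L²((0,∞))`. -/
def lam1 (lam : ℝ) (f : ℝ → ℝ) (ν : ℝ) : ℝ :=
  sInf {r | ∃ φ, MemB1 φ ∧ (0 < ∫ t in Ioi (0:ℝ), (φ t) ^ 2) ∧ r = RQf lam f ν φ}

/-- Second eigenvalue `λ₂(ν)` of the Neumann realization of
`-d²/dt² + (t-ν)² + λ f(t)²`, by the min-max principle over two-dimensional
subspaces of `B¹(ℝ⁺)` (spanned by `u, v` linearly independent in `L²`). -/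
def lam2 (lam : ℝ) (f : ℝ → ℝ) (ν : ℝ) : ℝ :=
  sInf {r | ∃ u v : ℝ → ℝ, MemB1 u ∧ MemB1 v ∧
    (∀ a b : ℝ, ¬(a = 0 ∧ b = 0) →
      0 < ∫ t in Ioi (0:ℝ), (a * u t + b * v t) ^ 2) ∧
    r = sSup {s | ∃ a b : ℝ, ¬(a = 0 ∧ b = 0) ∧
      s = RQf lam f ν (fun t => a * u t + b * v t)}}

namespace TempleProof

lemma intOn_congr {A B : ℝ → ℝ} (h : IntegrableOn A (Ioi 0) volume) (he : ∀ t, A t = B t) :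
    IntegrableOn B (Ioi 0) volume := (funext he : A = B) ▸ h

lemma contOn {φ : ℝ → ℝ} (h : MemB1 φ) : ContinuousOn φ (Ioi 0) :=
  fun t ht => ((h.2.1 t ht).continuousAt).continuousWithinAt

lemma aesm {φ : ℝ → ℝ} (h : MemB1 φ) :
    AEStronglyMeasurable φ (volume.restrict (Ioi 0)) :=
  (contOn h).aestronglyMeasurable measurableSet_Ioi

lemma deriv_aesm (φ : ℝ → ℝ) : AEStronglyMeasurable (deriv φ) (volume.restrict (Ioi 0)) :=
  (measurable_deriv φ).aestronglyMeasurable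

lemma int_mul_of_sq {u v : ℝ → ℝ}
    (hu2 : IntegrableOn (fun t => u t ^ 2) (Ioi 0) volume)
    (hv2 : IntegrableOn (fun t => v t ^ 2) (Ioi 0) volume)
    (hum : AEStronglyMeasurable u (volume.restrict (Ioi 0)))
    (hvm : AEStronglyMeasurable v (volume.restrict (Ioi 0))) :
    IntegrableOn (fun t => u t * v t) (Ioi 0) volume := by
  refine Integrable.mono' (((hu2.add hv2)).const_mul (1/2 : ℝ)) (hum.mul hvm) ?_
  filter_upwards with t
  simp only [Pi.add_apply]
  rw [Real.norm_eq_abs, abs_mul]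
  nlinarith [sq_nonneg (|u t| - |v t|), sq_abs (u t), sq_abs (v t),
    abs_nonneg (u t), abs_nonneg (v t)]

lemma int_bdd_mul {χ ψ : ℝ → ℝ} {C : ℝ}
    (hχ : ∀ t ∈ Ioi (0:ℝ), |χ t| ≤ C)
    (hψ : IntegrableOn ψ (Ioi 0) volume)
    (hm : AEStronglyMeasurable (fun t => χ t * ψ t) (volume.restrict (Ioi 0))) :
    IntegrableOn (fun t => χ t * ψ t) (Ioi 0) volume := by
  refine Integrable.mono' ((hψ.abs).const_mul C) hm ?_
  rw [ae_restrict_iff' measurableSet_Ioi]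
  filter_upwards with t ht
  rw [Real.norm_eq_abs, abs_mul]
  exact mul_le_mul_of_nonneg_right (hχ t ht) (abs_nonneg _)

lemma weight_sq {φ : ℝ → ℝ} (h : MemB1 φ) (c : ℝ) :
    IntegrableOn (fun t => ((t - c) * φ t) ^ 2) (Ioi 0) volume := by
  have hm : AEStronglyMeasurable (fun t => ((t - c) * φ t) ^ 2) (volume.restrict (Ioi 0)) := by
    apply ContinuousOn.aestronglyMeasurable ?_ measurableSet_Ioi
    exact (((continuousOn_id.sub continuousOn_const).mul (contOn h)).pow 2)
  refine Integrable.mono' ((h.2.2.2.2.const_mul 2).add (h.2.2.1.const_mul (2*c^2))) hm ?_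
  filter_upwards with t
  simp only [Pi.add_apply]
  rw [Real.norm_eq_abs, abs_of_nonneg (by positivity)]
  nlinarith [sq_nonneg (t * φ t + c * φ t)]


lemma sq_setIntegral_mono {φ : ℝ → ℝ} (h2 : IntegrableOn (fun t => φ t ^ 2) (Ioi 0) volume)
    {s : Set ℝ} (hs : s ⊆ Ioi 0) :
    ∫ t in s, φ t ^ 2 ≤ ∫ t in Ioi (0:ℝ), φ t ^ 2 := by
  apply setIntegral_mono_set h2 ?_ (HasSubset.Subset.eventuallyLE hs)
  filter_upwards with t using sq_nonneg _

lemma bounded {φ : ℝ → ℝ} (h : MemB1 φ) :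
    ∃ C : ℝ, 0 ≤ C ∧ ∀ t ∈ Ioi (0:ℝ), φ t ^ 2 ≤ C := by
  obtain ⟨hc, hd, h2, hd2, ht2⟩ := h
  set K := ∫ t in Ioi (0:ℝ), φ t ^ 2 with hK
  have hK0 : 0 ≤ K := setIntegral_nonneg measurableSet_Ioi fun t _ => sq_nonneg _
  have hbig : IntegrableOn (fun t => φ t ^ 2 + deriv φ t ^ 2) (Ioi 0) volume := h2.add hd2
  set M := ∫ t in Ioi (0:ℝ), (φ t ^ 2 + deriv φ t ^ 2) with hM
  have hM0 : 0 ≤ M := setIntegral_nonneg measurableSet_Ioi fun t _ => by positivity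
  have hs0 : ∃ s ∈ Ioo (0:ℝ) 1, φ s ^ 2 < K + 1 := by
    by_contra hcon
    push_neg at hcon
    have h1 : (K+1) * (volume (Ioo (0:ℝ) 1)).toReal ≤ ∫ t in Ioo (0:ℝ) 1, φ t ^ 2 :=
      setIntegral_ge_of_const_le_real measurableSet_Ioo (by simp) hcon
        (h2.mono_set Ioo_subset_Ioi_self)
    have h2' : ∫ t in Ioo (0:ℝ) 1, φ t ^ 2 ≤ K := sq_setIntegral_mono h2 Ioo_subset_Ioi_self
    rw [Real.volume_Ioo] at h1
    norm_num at h1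
    linarith
  obtain ⟨s0, hs0m, hs0v⟩ := hs0
  have key : ∀ a b : ℝ, 0 < a → a ≤ b → |φ b ^ 2 - φ a ^ 2| ≤ M := by
    intro a b ha hab
    have hsub : uIcc a b ⊆ Ioi 0 := by
      rw [uIcc_of_le hab]
      intro x hx
      exact lt_of_lt_of_le ha hx.1
    have hderiv : ∀ x ∈ uIcc a b, HasDerivAt (fun y => φ y ^ 2) (2 * φ x * deriv φ x) x := by
      intro x hx
      have hdx := (hd x (hsub hx)).hasDerivAt
      have := hdx.pow 2
      norm_num at this
      simp [mul_comm, mul_assoc, mul_left_comm] at this ⊢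
      exact this
    have hcontφ : ContinuousOn φ (uIcc a b) := fun x hx =>
      ((hd x (hsub hx)).continuousAt).continuousWithinAt
    have hbigI : IntegrableOn (fun x => φ x ^ 2 + deriv φ x ^ 2) (uIcc a b) volume :=
      hbig.mono_set hsub
    have hbigII : IntervalIntegrable (fun x => φ x ^ 2 + deriv φ x ^ 2) volume a b :=
      (intervalIntegrable_iff').mpr hbigI
    have hint : IntervalIntegrable (fun x => 2 * φ x * deriv φ x) volume a b := by
      rw [intervalIntegrable_iff']
      refine Integrable.mono' hbigI ?_ ?_
      · exact ((continuousOn_const.mul hcontφ).aestronglyMeasurable measurableSet_uIcc).mul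
          ((measurable_deriv φ).aestronglyMeasurable)
      · filter_upwards with x
        rw [Real.norm_eq_abs, abs_mul, abs_mul]
        simp only [abs_two]
        nlinarith [sq_nonneg (|φ x| - |deriv φ x|), sq_abs (φ x), sq_abs (deriv φ x),
          abs_nonneg (φ x), abs_nonneg (deriv φ x)]
    have hftc := intervalIntegral.integral_eq_sub_of_hasDerivAt hderiv hint
    rw [← hftc]
    have habs : |∫ x in a..b, 2 * φ x * deriv φ x| ≤ ∫ x in a..b, |2 * φ x * deriv φ x| :=
      intervalIntegral.abs_integral_le_integral_abs hab
    have hmono : ∫ x in a..b, |2 * φ x * deriv φ x| ≤ ∫ x in a..b, (φ x ^ 2 + deriv φ x ^ 2) := by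
      apply intervalIntegral.integral_mono_on hab hint.abs hbigII
      intro x hx
      rw [abs_mul, abs_mul]
      simp only [abs_two]
      nlinarith [sq_nonneg (|φ x| - |deriv φ x|), sq_abs (φ x), sq_abs (deriv φ x),
        abs_nonneg (φ x), abs_nonneg (deriv φ x)]
    have heq : ∫ x in a..b, (φ x ^ 2 + deriv φ x ^ 2) = ∫ x in Ioc a b, (φ x ^ 2 + deriv φ x ^ 2) :=
      intervalIntegral.integral_of_le hab
    have hfin : ∫ x in Ioc a b, (φ x ^ 2 + deriv φ x ^ 2) ≤ M := by
      apply setIntegral_mono_set hbig ?_ ?_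
      · filter_upwards with t using by positivity
      · apply HasSubset.Subset.eventuallyLE
        intro x hx
        exact lt_of_lt_of_le ha hx.1.le
    linarith
  refine ⟨K + 1 + M, by linarith, ?_⟩
  intro t ht
  rcases le_total s0 t with hst | hts
  · have h1 := key s0 t hs0m.1 hst
    have := (abs_le.mp h1).2
    linarith
  · have h1 := key t s0 (mem_Ioi.mp ht) hts
    have := (abs_le.mp h1).1
    linarith
lemma zero_on_Ioi {w : ℝ → ℝ} (hd : ∀ t ∈ Ioi (0:ℝ), DifferentiableAt ℝ w t)
    (h2 : IntegrableOn (fun t => w t ^ 2) (Ioi 0) volume)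
    (hz : ∫ t in Ioi (0:ℝ), w t ^ 2 = 0) : ∀ t ∈ Ioi (0:ℝ), w t = 0 := by
  have hae : ∀ᵐ t ∂(volume.restrict (Ioi 0)), w t ^ 2 = 0 := by
    have := (integral_eq_zero_iff_of_nonneg (fun t => sq_nonneg (w t)) h2).mp hz
    filter_upwards [this] with t ht using ht
  have hnull : volume ({t | w t ≠ 0} ∩ Ioi 0) = 0 := by
    rw [← Measure.restrict_apply' measurableSet_Ioi]
    apply measure_mono_null (t := {t | ¬ (w t ^ 2 = 0)}) ?_ (ae_iff.mp hae)
    intro x hx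
    simp only [mem_setOf_eq] at *
    exact fun h0 => hx (sq_eq_zero_iff.mp h0)
  intro t ht
  by_contra hne
  have hct : ContinuousAt w t := (hd t ht).continuousAt
  have hev : ∀ᶠ s in nhds t, w s ≠ 0 := hct.eventually_ne hne
  obtain ⟨δ, hδ, hball⟩ := Metric.eventually_nhds_iff.mp hev
  have hδ' : 0 < min (δ/2) t := lt_min (by linarith) (mem_Ioi.mp ht)
  have hsub : Ioo (t - min (δ/2) t) (t + min (δ/2) t) ⊆ {s | w s ≠ 0} ∩ Ioi 0 := by
    intro s hs
    have h1 := min_le_left (δ/2) t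
    have h2 := min_le_right (δ/2) t
    constructor
    · apply hball
      rw [Real.dist_eq, abs_lt]
      constructor <;> [nlinarith [hs.1]; nlinarith [hs.2]]
    · have h3 : (0:ℝ) ≤ t - min (δ/2) t := by linarith [mem_Ioi.mp ht]
      exact lt_of_le_of_lt h3 hs.1
  have hle : volume (Ioo (t - min (δ/2) t) (t + min (δ/2) t)) ≤ volume ({s | w s ≠ 0} ∩ Ioi 0) := measure_mono hsub
  have hzero : volume (Ioo (t - min (δ/2) t) (t + min (δ/2) t)) = 0 :=
    le_antisymm (le_trans hle (le_of_eq hnull)) (by simp)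
  rw [Real.volume_Ioo, ENNReal.ofReal_eq_zero] at hzero
  linarith

lemma split5 {p0 p1 p2 p3 p4 : ℝ → ℝ}
    (h0 : IntegrableOn p0 (Ioi 0) volume) (h1 : IntegrableOn p1 (Ioi 0) volume)
    (h2 : IntegrableOn p2 (Ioi 0) volume) (h3 : IntegrableOn p3 (Ioi 0) volume)
    (h4 : IntegrableOn p4 (Ioi 0) volume) (c0 c1 c2 c3 c4 : ℝ) :
    ∫ t in Ioi (0:ℝ), (c0 * p0 t + c1 * p1 t + c2 * p2 t + c3 * p3 t + c4 * p4 t) =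
      c0 * (∫ t in Ioi (0:ℝ), p0 t) + c1 * (∫ t in Ioi (0:ℝ), p1 t)
      + c2 * (∫ t in Ioi (0:ℝ), p2 t)
      + c3 * (∫ t in Ioi (0:ℝ), p3 t) + c4 * (∫ t in Ioi (0:ℝ), p4 t) := by
  have i0 : IntegrableOn (fun t => c0 * p0 t) (Ioi 0) volume := h0.const_mul c0
  have i1 : IntegrableOn (fun t => c1 * p1 t) (Ioi 0) volume := h1.const_mul c1
  have i2 : IntegrableOn (fun t => c2 * p2 t) (Ioi 0) volume := h2.const_mul c2
  have i3 : IntegrableOn (fun t => c3 * p3 t) (Ioi 0) volume := h3.const_mul c3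
  have i4 : IntegrableOn (fun t => c4 * p4 t) (Ioi 0) volume := h4.const_mul c4
  have i01 : IntegrableOn (fun t => c0 * p0 t + c1 * p1 t) (Ioi 0) volume := i0.add i1
  have i012 : IntegrableOn (fun t => c0 * p0 t + c1 * p1 t + c2 * p2 t) (Ioi 0) volume :=
    i01.add i2
  have i0123 : IntegrableOn
      (fun t => c0 * p0 t + c1 * p1 t + c2 * p2 t + c3 * p3 t) (Ioi 0) volume := i012.add i3
  rw [integral_add i0123 i4, integral_add i012 i3, integral_add i01 i2, integral_add i0 i1,
    integral_const_mul, integral_const_mul, integral_const_mul, integral_const_mul,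
    integral_const_mul]

lemma cs {g w : ℝ → ℝ} (hg : IntegrableOn (fun t => g t ^ 2) (Ioi 0) volume)
    (hw : IntegrableOn (fun t => w t ^ 2) (Ioi 0) volume)
    (hgw : IntegrableOn (fun t => g t * w t) (Ioi 0) volume) :
    (∫ t in Ioi (0:ℝ), g t * w t) ^ 2 ≤
      (∫ t in Ioi (0:ℝ), g t ^ 2) * (∫ t in Ioi (0:ℝ), w t ^ 2) := by
  have hB0 : 0 ≤ ∫ t in Ioi (0:ℝ), w t ^ 2 :=
    setIntegral_nonneg measurableSet_Ioi fun t _ => sq_nonneg _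
  rcases eq_or_lt_of_le hB0 with hB' | hB'
  · have hwz : ∀ᵐ t ∂(volume.restrict (Ioi 0)), w t ^ 2 = 0 := by
      have := (integral_eq_zero_iff_of_nonneg (fun t => sq_nonneg (w t)) hw).mp hB'.symm
      filter_upwards [this] with t ht using ht
    have hPz : (∫ t in Ioi (0:ℝ), g t * w t) = ∫ t in Ioi (0:ℝ), (0:ℝ) := by
      apply integral_congr_ae
      filter_upwards [hwz] with t ht
      rw [sq_eq_zero_iff.mp ht, mul_zero]
    rw [hPz, ← hB']
    simp
  · set s : ℝ := -(∫ t in Ioi (0:ℝ), g t * w t) / (∫ t in Ioi (0:ℝ), w t ^ 2) with hs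
    have hexp := split5 hg hgw hw hg hg 1 (2*s) (s^2) 0 0
    have hnn : 0 ≤ ∫ t in Ioi (0:ℝ), (1 * g t ^ 2 + (2*s) * (g t * w t) + s^2 * w t ^ 2
        + 0 * g t ^ 2 + 0 * g t ^ 2) := by
      apply setIntegral_nonneg measurableSet_Ioi
      intro t _
      have he : 1 * g t ^ 2 + (2*s) * (g t * w t) + s^2 * w t ^ 2 + 0 * g t ^ 2 + 0 * g t ^ 2
          = (g t + s * w t)^2 := by ring
      rw [he]
      exact sq_nonneg _
    rw [hexp] at hnn
    have hss : s * (∫ t in Ioi (0:ℝ), w t ^ 2) = -(∫ t in Ioi (0:ℝ), g t * w t) := by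
      rw [hs]
      field_simp
    nlinarith [hnn, hB', hss]

lemma eps_key (E A B C : ℝ) (h : ∀ ε : ℝ, 0 ≤ 2 * E * ε + A * ε^2 + B * ε^3 + C * ε^4) :
    ¬ (0 < E) := by
  intro hE
  have hM0 : 0 < |A| + |B| + |C| + 1 := by positivity
  have hu0 : 0 < min 1 (E / (|A| + |B| + |C| + 1)) := lt_min one_pos (by positivity)
  set u : ℝ := min 1 (E / (|A| + |B| + |C| + 1))
  have hu1 : u ≤ 1 := min_le_left _ _
  have huE : u * (|A| + |B| + |C| + 1) ≤ E := by
    have h1 : u ≤ E / (|A| + |B| + |C| + 1) := min_le_right _ _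
    rw [← le_div_iff₀ hM0]
    exact h1
  have h1 := h (-u)
  have hu2 : u^3 ≤ u^2 := by nlinarith
  have hu3 : u^4 ≤ u^2 := by nlinarith
  have ha : A * (-u)^2 ≤ |A| * u^2 := by
    have := le_abs_self A
    nlinarith [sq_nonneg u]
  have hb : B * (-u)^3 ≤ |B| * u^2 := by
    have h2 : -B ≤ |B| := neg_abs_le B |>.trans (le_abs_self B) |> fun _ => neg_le_abs B
    have h3 : B * (-u)^3 = (-B) * u^3 := by ring
    rw [h3]
    have h4 : (-B) * u^3 ≤ |B| * u^3 :=
      mul_le_mul_of_nonneg_right (neg_le_abs B) (by positivity)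
    have h5 : |B| * u^3 ≤ |B| * u^2 := mul_le_mul_of_nonneg_left hu2 (abs_nonneg B)
    linarith
  have hcc : C * (-u)^4 ≤ |C| * u^2 := by
    have h4 : C * u^4 ≤ |C| * u^4 :=
      mul_le_mul_of_nonneg_right (le_abs_self C) (by positivity)
    have h5 : |C| * u^4 ≤ |C| * u^2 := mul_le_mul_of_nonneg_left hu3 (abs_nonneg C)
    have h6 : C * (-u)^4 = C * u^4 := by ring
    linarith [h6 ▸ h4]
  -- 0 ≤ -2Eu + (|A|+|B|+|C|) u^2  and  (|A|+|B|+|C|) u ≤ E  gives 0 ≤ -2Eu + Eu = -Eu < 0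
  have h2 : 2 * E * u ≤ (|A| + |B| + |C|) * u^2 := by nlinarith [h1, ha, hb, hcc]
  nlinarith [h2, huE, mul_pos hE hu0, mul_pos hu0 hu0, sq_nonneg u]

lemma eps_lemma {E A B C : ℝ}
    (h : ∀ ε : ℝ, 0 ≤ 2 * E * ε + A * ε^2 + B * ε^3 + C * ε^4) : E = 0 := by
  rcases lt_trichotomy E 0 with hE | hE | hE
  · exfalso
    apply eps_key (-E) A (-B) C ?_ (by linarith)
    intro ε
    have := h (-ε)
    nlinarith [this]
  · exact hE
  · exact absurd hE (eps_key E A B C h)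

lemma eps_to_zero {G P R η : ℝ} (hG : 0 < G) (hP : 0 ≤ P)
    (h : ∀ ε : ℝ, 0 < ε → ε < G → η - P / (G - ε) ≤ R) : η - P / G ≤ R := by
  by_contra hc
  push_neg at hc
  have hd0 : 0 < η - P / G - R := by linarith
  set d : ℝ := η - P / G - R with hd
  rcases eq_or_lt_of_le hP with hP0 | hP0
  · have h1 := h (G/2) (by linarith) (by linarith)
    rw [← hP0] at h1 hc
    simp only [zero_div, sub_zero] at h1 hc
    linarith
  · have hε0 : 0 < min (G/2) (d * G^2 / (4 * P)) := lt_min (by linarith) (by positivity)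
    set ε : ℝ := min (G/2) (d * G^2 / (4 * P)) with hε
    have hεG : ε < G := lt_of_le_of_lt (min_le_left _ _) (by linarith)
    have hg : G/2 ≤ G - ε := by
      have := min_le_left (G/2) (d * G^2 / (4 * P)); linarith
    have hge : 0 < G - ε := by linarith
    have key := h ε hε0 hεG
    have h1 : P / (G - ε) - P / G = P * ε / ((G - ε) * G) := by
      rw [div_sub_div _ _ hge.ne' hG.ne']
      congr 1
      ring
    have h2 : P * ε ≤ d * G^2 / 4 := by
      have hmr := min_le_right (G/2) (d * G^2 / (4 * P))
      calc P * ε ≤ P * (d * G^2 / (4 * P)) := mul_le_mul_of_nonneg_left hmr hP0.le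
      _ = d * G^2 / 4 := by field_simp
    have h3 : G^2 / 2 ≤ (G - ε) * G := by nlinarith
    have h4 : P * ε / ((G - ε) * G) ≤ d / 2 := by
      rw [div_le_iff₀ (by positivity)]
      nlinarith
    linarith [key, h1, h4]

lemma temple_alg {F W η Q T c L : ℝ} (hF : 0 < F) (hW : 0 < W) (hL : η < L)
    {a b : ℝ} (hab : ¬(a = 0 ∧ b = 0))
    (h : L ≤ (a^2 * (η * F) + 2*a*b*Q + b^2 * T) / (a^2 * F + b^2 * W)) :
    η - Q^2 / ((L - η) * (F * W)) ≤ (c^2 * (η * F) + 2*c*Q + T) / (c^2 * F + W) := by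
  have hD : 0 < a^2 * F + b^2 * W := by
    rcases not_and_or.mp hab with ha | hb
    · have h1 : 0 < |a| := abs_pos.mpr ha
      nlinarith [sq_abs a, sq_nonneg b, mul_pos (mul_pos h1 h1) hF,
        mul_nonneg (sq_nonneg b) hW.le]
    · have h1 : 0 < |b| := abs_pos.mpr hb
      nlinarith [sq_abs b, sq_nonneg a, mul_pos (mul_pos h1 h1) hW,
        mul_nonneg (sq_nonneg a) hF.le]
  have hnum : L * (a^2 * F + b^2 * W) ≤ a^2 * (η * F) + 2*a*b*Q + b^2 * T :=
    (le_div_iff₀ hD).mp h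
  have hb : b ≠ 0 := by
    intro hb0
    subst hb0
    have ha : a ≠ 0 := fun h0 => hab ⟨h0, rfl⟩
    have h1 : 0 < a^2 := by positivity
    nlinarith [hnum]
  have hb2 : 0 < b^2 := by positivity
  have hLη : 0 < L - η := sub_pos.mpr hL
  have hstar : -Q^2 ≤ (L - η) * F * (T - L * W) := by
    have i : (L - η) * F * a^2 - 2*a*b*Q ≤ b^2 * (T - L * W) := by nlinarith [hnum]
    have ii : -(Q^2 * b^2) ≤ (L - η) * F * ((L - η) * F * a^2 - 2*a*b*Q) := by
      nlinarith [sq_nonneg ((L - η) * F * a - b * Q)]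
    have iii : -(Q^2 * b^2) ≤ (L - η) * F * (b^2 * (T - L * W)) :=
      le_trans ii (mul_le_mul_of_nonneg_left i (by positivity))
    have iv : 0 ≤ b^2 * ((L - η) * F * (T - L * W) + Q^2) := by nlinarith [iii]
    nlinarith [(mul_nonneg_iff_of_pos_left hb2).mp iv]
  have hD' : 0 < c^2 * F + W := by nlinarith [sq_nonneg c, mul_nonneg (sq_nonneg c) hF.le]
  have hK : 0 < (L - η) * (F * W) := by positivity
  rw [le_div_iff₀ hD']
  have hQK : Q^2 / ((L - η) * (F * W)) * ((L - η) * (F * W)) = Q^2 :=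
    div_mul_cancel₀ _ hK.ne'
  have key : (η - Q^2 / ((L - η) * (F * W))) * (c^2 * F + W) * ((L - η) * (F * W))
      ≤ (c^2 * (η * F) + 2*c*Q + T) * ((L - η) * (F * W)) := by
    have hexp : (η - Q^2 / ((L - η) * (F * W))) * (c^2 * F + W) * ((L - η) * (F * W))
        = η * (c^2 * F + W) * ((L - η) * (F * W)) - Q^2 * (c^2 * F + W) := by
      have h9 : (η - Q^2 / ((L - η) * (F * W))) * (c^2 * F + W) * ((L - η) * (F * W))
          = η * (c^2 * F + W) * ((L - η) * (F * W))
            - (Q^2 / ((L - η) * (F * W)) * ((L - η) * (F * W))) * (c^2 * F + W) := by ring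
      rw [h9, hQK]
    rw [hexp]
    have hstarW : -Q^2 * W ≤ (L - η) * F * (T - L * W) * W := by
      nlinarith [mul_le_mul_of_nonneg_right hstar hW.le]
    nlinarith [mul_nonneg hF.le (sq_nonneg (c * Q + (L - η) * W)), hstarW,
      mul_pos hLη (mul_pos hF hW), hW, hF]
  exact le_of_mul_le_mul_right key hK
lemma memB1_comb {f w : ℝ → ℝ} (hf : MemB1 f) (hw : MemB1 w) (a b : ℝ) :
    MemB1 (fun t => a * f t + b * w t) := by
  refine ⟨(hf.1.const_mul a).add (hw.1.const_mul b),
    fun t ht => ((hf.2.1 t ht).const_mul a).add ((hw.2.1 t ht).const_mul b), ?_, ?_, ?_⟩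
  · have hm : AEStronglyMeasurable (fun t => (a * f t + b * w t) ^ 2)
        (volume.restrict (Ioi 0)) :=
      (((continuousOn_const.mul (contOn hf)).add (continuousOn_const.mul (contOn hw))).pow
        2).aestronglyMeasurable measurableSet_Ioi
    refine Integrable.mono' ((hf.2.2.1.const_mul (2*a^2)).add (hw.2.2.1.const_mul (2*b^2)))
      hm ?_
    filter_upwards with t
    simp only [Pi.add_apply]
    rw [Real.norm_eq_abs, abs_of_nonneg (sq_nonneg _)]
    nlinarith [sq_nonneg (a * f t - b * w t)]
  · have hbase : IntegrableOn (fun t => (a * deriv f t + b * deriv w t) ^ 2) (Ioi 0)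
        volume := by
      have hm : AEStronglyMeasurable (fun t => (a * deriv f t + b * deriv w t) ^ 2)
          (volume.restrict (Ioi 0)) :=
        ((((measurable_deriv f).const_mul a).add
          ((measurable_deriv w).const_mul b)).pow_const 2).aestronglyMeasurable
      refine Integrable.mono'
        ((hf.2.2.2.1.const_mul (2*a^2)).add (hw.2.2.2.1.const_mul (2*b^2))) hm ?_
      filter_upwards with t
      simp only [Pi.add_apply]
      rw [Real.norm_eq_abs, abs_of_nonneg (sq_nonneg _)]
      nlinarith [sq_nonneg (a * deriv f t - b * deriv w t)]
    apply hbase.congr_fun ?_ measurableSet_Ioi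
    intro t ht
    have hda := ((hf.2.1 t ht).hasDerivAt.const_mul a).add
      ((hw.2.1 t ht).hasDerivAt.const_mul b)
    simp only []
    exact congrArg (· ^ 2) hda.deriv.symm
  · have hm : AEStronglyMeasurable (fun t => (t * (a * f t + b * w t)) ^ 2)
        (volume.restrict (Ioi 0)) :=
      ((continuousOn_id.mul ((continuousOn_const.mul (contOn hf)).add
        (continuousOn_const.mul (contOn hw)))).pow 2).aestronglyMeasurable measurableSet_Ioi
    refine Integrable.mono'
      ((hf.2.2.2.2.const_mul (2*a^2)).add (hw.2.2.2.2.const_mul (2*b^2))) hm ?_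
    filter_upwards with t
    simp only [Pi.add_apply]
    rw [Real.norm_eq_abs, abs_of_nonneg (sq_nonneg _)]
    nlinarith [sq_nonneg (a * (t * f t) - b * (t * w t))]

lemma memB1_transport {u v : ℝ → ℝ} (h : MemB1 u) (he : ∀ t, u t = v t) : MemB1 v :=
  (funext he : u = v) ▸ h

lemma memB1_smul {φ : ℝ → ℝ} (h : MemB1 φ) (s : ℝ) : MemB1 (fun t => s * φ t) :=
  memB1_transport (memB1_comb h h s 0) (fun t => by ring)

lemma memB1_add_smul {f w : ℝ → ℝ} (hf : MemB1 f) (hw : MemB1 w) (ε : ℝ) :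
    MemB1 (fun t => f t + ε * w t) :=
  memB1_transport (memB1_comb hf hw 1 ε) (fun t => by ring)

lemma exp_hasDeriv (t : ℝ) : HasDerivAt (fun t : ℝ => rexp (-t)) (-rexp (-t)) t := by
  have := (Real.hasDerivAt_exp (-t)).comp t ((hasDerivAt_id t).neg)
  simp at this
  exact this

lemma exp_deriv_eq : deriv (fun t : ℝ => rexp (-t)) = fun t => -rexp (-t) :=
  funext fun t => (exp_hasDeriv t).deriv

lemma exp_sq_eq (t : ℝ) : rexp (-(2*t)) = rexp (-t) ^ 2 := by
  rw [sq, ← Real.exp_add]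
  ring_nf

lemma memB1_exp : MemB1 (fun t => rexp (-t)) := by
  have base : IntegrableOn (fun x => rexp (-(2*x))) (Ioi 0) volume := by
    have h := exp_neg_integrableOn_Ioi 0 (by norm_num : (0:ℝ) < 2)
    apply intOn_congr h
    intro t
    ring_nf
  refine ⟨(Real.continuous_exp.comp continuous_neg).continuousWithinAt,
    fun t _ => (exp_hasDeriv t).differentiableAt, ?_, ?_, ?_⟩
  · exact intOn_congr base exp_sq_eq
  · simp only [exp_deriv_eq]
    apply intOn_congr base
    intro t
    rw [neg_sq, ← exp_sq_eq]
  · have hm : AEStronglyMeasurable (fun t => (t * rexp (-t)) ^ 2)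
        (volume.restrict (Ioi 0)) :=
      (((continuous_id.mul (Real.continuous_exp.comp continuous_neg)).pow
        2)).aestronglyMeasurable.restrict
    refine Integrable.mono' ((exp_neg_integrableOn_Ioi 0 one_pos).const_mul 4) hm ?_
    rw [ae_restrict_iff' measurableSet_Ioi]
    filter_upwards with t ht
    have ht0 : (0:ℝ) < t := mem_Ioi.mp ht
    have e3 := Real.add_one_le_exp (t/2)
    have e2 : rexp (t/2) * rexp (-t) = rexp (-(t/2)) := by rw [← Real.exp_add]; ring_nf
    have e1 : rexp (-(t/2)) * rexp (-(t/2)) = rexp (-t) := by rw [← Real.exp_add]; ring_nf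
    have hp1 : (0:ℝ) < rexp (-t) := Real.exp_pos _
    have hp2 : (0:ℝ) < rexp (-(t/2)) := Real.exp_pos _
    have hp3 : (0:ℝ) < rexp (t/2) := Real.exp_pos _
    rw [Real.norm_eq_abs, abs_of_nonneg (sq_nonneg _), neg_one_mul]
    have k1 : t ≤ 2 * rexp (t/2) := by nlinarith
    have k2 : t * rexp (-t) ≤ 2 * rexp (-(t/2)) := by nlinarith
    nlinarith [mul_nonneg ht0.le hp1.le]

lemma exp_sq_pos : 0 < ∫ t in Ioi (0:ℝ), (rexp (-t)) ^ 2 := by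
  rw [setIntegral_pos_iff_support_of_nonneg_ae ?_ (intOn_congr
    (by {have h := exp_neg_integrableOn_Ioi 0 (by norm_num : (0:ℝ) < 2)
         apply intOn_congr h; intro t; ring_nf}) exp_sq_eq)]
  · have hsup : Function.support (fun t : ℝ => rexp (-t) ^ 2) = univ := by
      ext x
      simp only [Function.mem_support, mem_univ, iff_true]
      positivity
    rw [hsup, univ_inter, Real.volume_Ioi]
    simp
  · filter_upwards with t using sq_nonneg _
lemma RQ_nonneg (ξ : ℝ) (φ : ℝ → ℝ) : 0 ≤ RQ ξ φ :=
  div_nonneg (setIntegral_nonneg measurableSet_Ioi fun t _ => by positivity)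
    (setIntegral_nonneg measurableSet_Ioi fun t _ => sq_nonneg _)

lemma RQf_nonneg {lam : ℝ} (hlam : 0 ≤ lam) (f : ℝ → ℝ) (ν : ℝ) (φ : ℝ → ℝ) :
    0 ≤ RQf lam f ν φ :=
  div_nonneg (setIntegral_nonneg measurableSet_Ioi fun t _ => by positivity)
    (setIntegral_nonneg measurableSet_Ioi fun t _ => sq_nonneg _)

lemma theta0_nonneg : 0 ≤ Theta0 := by
  apply Real.sInf_nonneg
  rintro x ⟨ξ, rfl⟩
  apply Real.sInf_nonneg
  rintro r ⟨φ, _, _, rfl⟩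
  exact RQ_nonneg ξ φ

lemma euler_lagrange {lam ζ : ℝ} {f : ℝ → ℝ} (hmin : IsGlobalMin lam ζ f)
    {w : ℝ → ℝ} (hw : MemB1 w) :
    ∫ t in Ioi (0:ℝ), (deriv f t * deriv w t + (t - ζ)^2 * (f t * w t)
      + lam * (f t ^ 3 * w t) - lam * (f t * w t)) = 0 := by
  obtain ⟨hf, hminf⟩ := hmin
  obtain ⟨Cf, hCf0, hCf⟩ := bounded hf
  obtain ⟨Cw, hCw0, hCw⟩ := bounded hw
  have hfm := aesm hf
  have hwm := aesm hw
  have htfm : AEStronglyMeasurable (fun t => (t - ζ) * f t) (volume.restrict (Ioi 0)) :=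
    ((continuousOn_id.sub continuousOn_const).mul (contOn hf)).aestronglyMeasurable
      measurableSet_Ioi
  have htwm : AEStronglyMeasurable (fun t => (t - ζ) * w t) (volume.restrict (Ioi 0)) :=
    ((continuousOn_id.sub continuousOn_const).mul (contOn hw)).aestronglyMeasurable
      measurableSet_Ioi
  have hCf' : ∀ t ∈ Ioi (0:ℝ), |f t ^ 2| ≤ Cf := fun t ht => by
    rw [abs_of_nonneg (sq_nonneg _)]; exact hCf t ht
  have hCw' : ∀ t ∈ Ioi (0:ℝ), |w t ^ 2| ≤ Cw := fun t ht => by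
    rw [abs_of_nonneg (sq_nonneg _)]; exact hCw t ht
  have i_fw : IntegrableOn (fun t => f t * w t) (Ioi 0) volume :=
    int_mul_of_sq hf.2.2.1 hw.2.2.1 hfm hwm
  have i_dfdw : IntegrableOn (fun t => deriv f t * deriv w t) (Ioi 0) volume :=
    int_mul_of_sq hf.2.2.2.1 hw.2.2.2.1 (deriv_aesm f) (deriv_aesm w)
  have i_tftw : IntegrableOn (fun t => ((t - ζ) * f t) * ((t - ζ) * w t)) (Ioi 0) volume :=
    int_mul_of_sq (weight_sq hf ζ) (weight_sq hw ζ) htfm htwm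
  have i_f3w : IntegrableOn (fun t => f t ^ 2 * (f t * w t)) (Ioi 0) volume :=
    int_bdd_mul hCf' i_fw ((((contOn hf).pow 2).mul
      ((contOn hf).mul (contOn hw))).aestronglyMeasurable measurableSet_Ioi)
  have i_f4 : IntegrableOn (fun t => f t ^ 2 * f t ^ 2) (Ioi 0) volume :=
    int_bdd_mul hCf' hf.2.2.1 ((((contOn hf).pow 2).mul
      ((contOn hf).pow 2)).aestronglyMeasurable measurableSet_Ioi)
  have i_f2w2 : IntegrableOn (fun t => f t ^ 2 * w t ^ 2) (Ioi 0) volume :=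
    int_bdd_mul hCf' hw.2.2.1 ((((contOn hf).pow 2).mul
      ((contOn hw).pow 2)).aestronglyMeasurable measurableSet_Ioi)
  have i_fw3 : IntegrableOn (fun t => w t ^ 2 * (f t * w t)) (Ioi 0) volume :=
    int_bdd_mul hCw' i_fw ((((contOn hw).pow 2).mul
      ((contOn hf).mul (contOn hw))).aestronglyMeasurable measurableSet_Ioi)
  have i_w4 : IntegrableOn (fun t => w t ^ 2 * w t ^ 2) (Ioi 0) volume :=
    int_bdd_mul hCw' hw.2.2.1 ((((contOn hw).pow 2).mul
      ((contOn hw).pow 2)).aestronglyMeasurable measurableSet_Ioi)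
  have ip0 : IntegrableOn (fun t => deriv f t ^ 2 + (t - ζ) ^ 2 * f t ^ 2
      + lam / 2 * f t ^ 4 - lam * f t ^ 2) (Ioi 0) volume := by
    have h1 : IntegrableOn (fun t => (t - ζ) ^ 2 * f t ^ 2) (Ioi 0) volume :=
      intOn_congr (weight_sq hf ζ) (fun t => by ring)
    have h2 : IntegrableOn (fun t => lam / 2 * f t ^ 4) (Ioi 0) volume :=
      intOn_congr (i_f4.const_mul (lam/2)) (fun t => by ring)
    exact ((hf.2.2.2.1.add h1).add h2).sub (hf.2.2.1.const_mul lam)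
  have ip1 : IntegrableOn (fun t => 2 * (deriv f t * deriv w t + (t - ζ)^2 * (f t * w t)
      + lam * (f t ^ 3 * w t) - lam * (f t * w t))) (Ioi 0) volume := by
    have h1 : IntegrableOn (fun t => (t - ζ)^2 * (f t * w t)) (Ioi 0) volume :=
      intOn_congr i_tftw (fun t => by ring)
    have h2 : IntegrableOn (fun t => lam * (f t ^ 3 * w t)) (Ioi 0) volume :=
      intOn_congr (i_f3w.const_mul lam) (fun t => by ring)
    have h3 : IntegrableOn (fun t => lam * (f t * w t)) (Ioi 0) volume :=
      i_fw.const_mul lam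
    exact (((i_dfdw.add h1).add h2).sub h3).const_mul 2
  have ip2 : IntegrableOn (fun t => deriv w t ^ 2 + (t - ζ)^2 * w t ^ 2
      + 3 * lam * (f t ^ 2 * w t ^ 2) - lam * w t ^ 2) (Ioi 0) volume := by
    have h1 : IntegrableOn (fun t => (t - ζ)^2 * w t ^ 2) (Ioi 0) volume :=
      intOn_congr (weight_sq hw ζ) (fun t => by ring)
    exact ((hw.2.2.2.1.add h1).add (i_f2w2.const_mul (3*lam))).sub (hw.2.2.1.const_mul lam)
  have ip3 : IntegrableOn (fun t => 2 * lam * (w t ^ 2 * (f t * w t))) (Ioi 0) volume :=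
    i_fw3.const_mul (2*lam)
  have ip4 : IntegrableOn (fun t => lam / 2 * (w t ^ 2 * w t ^ 2)) (Ioi 0) volume :=
    i_w4.const_mul (lam/2)
  have key : ∀ ε : ℝ, GLF ζ lam (fun t => f t + ε * w t)
      = GLF ζ lam f
        + ε * (∫ t in Ioi (0:ℝ), (2 * (deriv f t * deriv w t + (t - ζ)^2 * (f t * w t)
            + lam * (f t ^ 3 * w t) - lam * (f t * w t))))
        + ε^2 * (∫ t in Ioi (0:ℝ), (deriv w t ^ 2 + (t - ζ)^2 * w t ^ 2
            + 3 * lam * (f t ^ 2 * w t ^ 2) - lam * w t ^ 2))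
        + ε^3 * (∫ t in Ioi (0:ℝ), (2 * lam * (w t ^ 2 * (f t * w t))))
        + ε^4 * (∫ t in Ioi (0:ℝ), (lam / 2 * (w t ^ 2 * w t ^ 2))) := by
    intro ε
    have hEq : EqOn
        (fun t => deriv (fun s => f s + ε * w s) t ^ 2 + (t - ζ) ^ 2 * (f t + ε * w t) ^ 2
          + lam / 2 * (f t + ε * w t) ^ 4 - lam * (f t + ε * w t) ^ 2)
        (fun t => 1 * (deriv f t ^ 2 + (t - ζ) ^ 2 * f t ^ 2
            + lam / 2 * f t ^ 4 - lam * f t ^ 2)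
          + ε * (2 * (deriv f t * deriv w t + (t - ζ)^2 * (f t * w t)
            + lam * (f t ^ 3 * w t) - lam * (f t * w t)))
          + ε^2 * (deriv w t ^ 2 + (t - ζ)^2 * w t ^ 2
            + 3 * lam * (f t ^ 2 * w t ^ 2) - lam * w t ^ 2)
          + ε^3 * (2 * lam * (w t ^ 2 * (f t * w t)))
          + ε^4 * (lam / 2 * (w t ^ 2 * w t ^ 2))) (Ioi 0) := by
      intro t ht
      have hda : deriv (fun s => f s + ε * w s) t = deriv f t + ε * deriv w t :=
        ((hf.2.1 t ht).hasDerivAt.add ((hw.2.1 t ht).hasDerivAt.const_mul ε)).deriv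
      simp only []
      rw [hda]
      ring
    simp only [GLF]
    rw [setIntegral_congr_fun measurableSet_Ioi hEq,
      split5 ip0 ip1 ip2 ip3 ip4 1 ε (ε^2) (ε^3) (ε^4)]
    ring
  have hquad : ∀ ε : ℝ, 0 ≤
      2 * ((∫ t in Ioi (0:ℝ), (2 * (deriv f t * deriv w t + (t - ζ)^2 * (f t * w t)
          + lam * (f t ^ 3 * w t) - lam * (f t * w t)))) / 2) * ε
      + (∫ t in Ioi (0:ℝ), (deriv w t ^ 2 + (t - ζ)^2 * w t ^ 2
          + 3 * lam * (f t ^ 2 * w t ^ 2) - lam * w t ^ 2)) * ε^2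
      + (∫ t in Ioi (0:ℝ), (2 * lam * (w t ^ 2 * (f t * w t)))) * ε^3
      + (∫ t in Ioi (0:ℝ), (lam / 2 * (w t ^ 2 * w t ^ 2))) * ε^4 := by
    intro ε
    have h1 := hminf ζ (fun t => f t + ε * w t) (memB1_add_smul hf hw ε)
    rw [key ε] at h1
    nlinarith [h1]
  have hE := eps_lemma hquad
  have h2 : (∫ t in Ioi (0:ℝ), (2 * (deriv f t * deriv w t + (t - ζ)^2 * (f t * w t)
      + lam * (f t ^ 3 * w t) - lam * (f t * w t))))
      = 2 * ∫ t in Ioi (0:ℝ), (deriv f t * deriv w t + (t - ζ)^2 * (f t * w t)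
      + lam * (f t ^ 3 * w t) - lam * (f t * w t)) := integral_const_mul 2 _
  rw [h2] at hE
  linarith

lemma Jzero {lam ζ : ℝ} {f : ℝ → ℝ} (hmin : IsGlobalMin lam ζ f) :
    ∫ t in Ioi (0:ℝ), ((t - ζ) * f t ^ 2) = 0 := by
  obtain ⟨hf, hminf⟩ := hmin
  have hfm := aesm hf
  have htfm : AEStronglyMeasurable (fun t => (t - ζ) * f t) (volume.restrict (Ioi 0)) :=
    ((continuousOn_id.sub continuousOn_const).mul (contOn hf)).aestronglyMeasurable
      measurableSet_Ioi
  obtain ⟨Cf, hCf0, hCf⟩ := bounded hf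
  have hCf' : ∀ t ∈ Ioi (0:ℝ), |f t ^ 2| ≤ Cf := fun t ht => by
    rw [abs_of_nonneg (sq_nonneg _)]; exact hCf t ht
  have i_f4 : IntegrableOn (fun t => f t ^ 2 * f t ^ 2) (Ioi 0) volume :=
    int_bdd_mul hCf' hf.2.2.1 ((((contOn hf).pow 2).mul
      ((contOn hf).pow 2)).aestronglyMeasurable measurableSet_Ioi)
  have i_tf2 : IntegrableOn (fun t => (t - ζ) * f t ^ 2) (Ioi 0) volume :=
    intOn_congr (int_mul_of_sq (weight_sq hf ζ) hf.2.2.1 htfm hfm) (fun t => by ring)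
  have ip0 : IntegrableOn (fun t => deriv f t ^ 2 + (t - ζ) ^ 2 * f t ^ 2
      + lam / 2 * f t ^ 4 - lam * f t ^ 2) (Ioi 0) volume := by
    have h1 : IntegrableOn (fun t => (t - ζ) ^ 2 * f t ^ 2) (Ioi 0) volume :=
      intOn_congr (weight_sq hf ζ) (fun t => by ring)
    have h2 : IntegrableOn (fun t => lam / 2 * f t ^ 4) (Ioi 0) volume :=
      intOn_congr (i_f4.const_mul (lam/2)) (fun t => by ring)
    exact ((hf.2.2.2.1.add h1).add h2).sub (hf.2.2.1.const_mul lam)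
  have key : ∀ z : ℝ, GLF z lam f
      = GLF ζ lam f + (-2*(z - ζ)) * (∫ t in Ioi (0:ℝ), ((t - ζ) * f t ^ 2))
        + (z - ζ)^2 * (∫ t in Ioi (0:ℝ), f t ^ 2) := by
    intro z
    have hEq : EqOn
        (fun t => deriv f t ^ 2 + (t - z) ^ 2 * f t ^ 2
          + lam / 2 * f t ^ 4 - lam * f t ^ 2)
        (fun t => 1 * (deriv f t ^ 2 + (t - ζ) ^ 2 * f t ^ 2
            + lam / 2 * f t ^ 4 - lam * f t ^ 2)
          + (-2*(z - ζ)) * ((t - ζ) * f t ^ 2)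
          + (z - ζ)^2 * (f t ^ 2)
          + 0 * (f t ^ 2) + 0 * (f t ^ 2)) (Ioi 0) := by
      intro t _
      simp only []
      ring
    simp only [GLF]
    rw [setIntegral_congr_fun measurableSet_Ioi hEq,
      split5 ip0 i_tf2 hf.2.2.1 hf.2.2.1 hf.2.2.1 1 (-2*(z - ζ)) ((z - ζ)^2) 0 0]
    ring
  have hquad : ∀ s : ℝ, 0 ≤
      2 * (-(∫ t in Ioi (0:ℝ), ((t - ζ) * f t ^ 2))) * s
      + (∫ t in Ioi (0:ℝ), f t ^ 2) * s^2 + 0 * s^3 + 0 * s^4 := by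
    intro s
    have h1 := hminf (ζ + s) f hf
    rw [key (ζ + s)] at h1
    nlinarith [h1]
  have hE := eps_lemma hquad
  linarith

lemma Fpos {lam ζ : ℝ} {f : ℝ → ℝ} (hlam : Theta0 < lam) (hmin : IsGlobalMin lam ζ f) :
    0 < ∫ t in Ioi (0:ℝ), f t ^ 2 := by
  obtain ⟨hf, hminf⟩ := hmin
  have hF0 : 0 ≤ ∫ t in Ioi (0:ℝ), f t ^ 2 :=
    setIntegral_nonneg measurableSet_Ioi fun t _ => sq_nonneg _
  rcases eq_or_lt_of_le hF0 with h0 | h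
  swap
  · exact h
  exfalso
  have hlam0 : 0 < lam := lt_of_le_of_lt theta0_nonneg hlam
  have hf0 : ∀ t ∈ Ioi (0:ℝ), f t = 0 := zero_on_Ioi hf.2.1 hf.2.2.1 h0.symm
  have hdf0 : ∀ t ∈ Ioi (0:ℝ), deriv f t = 0 := by
    intro t ht
    have hev : f =ᶠ[nhds t] (fun _ => (0:ℝ)) := by
      filter_upwards [isOpen_Ioi.mem_nhds ht] with s hs using hf0 s hs
    rw [Filter.EventuallyEq.deriv_eq hev]
    exact deriv_const t 0
  have hGLF0 : GLF ζ lam f = 0 := by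
    simp only [GLF]
    have hEq : EqOn (fun t => deriv f t ^ 2 + (t - ζ) ^ 2 * f t ^ 2
        + lam / 2 * f t ^ 4 - lam * f t ^ 2) (fun _ => (0:ℝ)) (Ioi 0) := by
      intro t ht
      simp only []
      rw [hf0 t ht, hdf0 t ht]
      ring
    rw [setIntegral_congr_fun measurableSet_Ioi hEq, integral_zero]
  have hlam' : sInf (Set.range mu1) < lam := hlam
  obtain ⟨m, ⟨ξ, rfl⟩, hm⟩ := exists_lt_of_csInf_lt (range_nonempty mu1) hlam'
  have hm' : sInf {r | ∃ φ, MemB1 φ ∧ (0 < ∫ t in Ioi (0:ℝ), (φ t) ^ 2) ∧ r = RQ ξ φ}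
      < lam := hm
  have hne : Set.Nonempty {r | ∃ φ, MemB1 φ ∧ (0 < ∫ t in Ioi (0:ℝ), (φ t) ^ 2)
      ∧ r = RQ ξ φ} :=
    ⟨RQ ξ (fun t => rexp (-t)), fun t => rexp (-t), memB1_exp, exp_sq_pos, rfl⟩
  obtain ⟨r, ⟨φ, hφB1, hφpos, rfl⟩, hr⟩ := exists_lt_of_csInf_lt hne hm'
  have hr' : (∫ t in Ioi (0:ℝ), ((deriv φ t) ^ 2 + (t - ξ) ^ 2 * (φ t) ^ 2))
      / (∫ t in Ioi (0:ℝ), (φ t) ^ 2) < lam := hr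
  have hnum : (∫ t in Ioi (0:ℝ), ((deriv φ t) ^ 2 + (t - ξ) ^ 2 * (φ t) ^ 2))
      < lam * (∫ t in Ioi (0:ℝ), (φ t) ^ 2) := (div_lt_iff₀ hφpos).mp hr'
  obtain ⟨Cφ, hCφ0, hCφ⟩ := bounded hφB1
  have hCφ' : ∀ t ∈ Ioi (0:ℝ), |φ t ^ 2| ≤ Cφ := fun t ht => by
    rw [abs_of_nonneg (sq_nonneg _)]; exact hCφ t ht
  have i_φ4 : IntegrableOn (fun t => φ t ^ 2 * φ t ^ 2) (Ioi 0) volume :=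
    int_bdd_mul hCφ' hφB1.2.2.1 ((((contOn hφB1).pow 2).mul
      ((contOn hφB1).pow 2)).aestronglyMeasurable measurableSet_Ioi)
  have iN : IntegrableOn (fun t => (deriv φ t) ^ 2 + (t - ξ) ^ 2 * (φ t) ^ 2)
      (Ioi 0) volume :=
    hφB1.2.2.2.1.add (intOn_congr (weight_sq hφB1 ξ) (fun t => by ring))
  have hK40 : 0 ≤ ∫ t in Ioi (0:ℝ), (φ t ^ 2 * φ t ^ 2) :=
    setIntegral_nonneg measurableSet_Ioi fun t _ => by positivity
  have key : ∀ s : ℝ, GLF ξ lam (fun t => s * φ t)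
      = s^2 * (∫ t in Ioi (0:ℝ), ((deriv φ t) ^ 2 + (t - ξ) ^ 2 * (φ t) ^ 2))
        + lam / 2 * s^4 * (∫ t in Ioi (0:ℝ), (φ t ^ 2 * φ t ^ 2))
        - lam * s^2 * (∫ t in Ioi (0:ℝ), (φ t) ^ 2) := by
    intro s
    have hEq : EqOn
        (fun t => deriv (fun u => s * φ u) t ^ 2 + (t - ξ) ^ 2 * (s * φ t) ^ 2
          + lam / 2 * (s * φ t) ^ 4 - lam * (s * φ t) ^ 2)
        (fun t => (s^2) * ((deriv φ t) ^ 2 + (t - ξ) ^ 2 * (φ t) ^ 2)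
          + (lam / 2 * s^4) * (φ t ^ 2 * φ t ^ 2)
          + (-(lam * s^2)) * (φ t ^ 2) + 0 * (φ t ^ 2) + 0 * (φ t ^ 2)) (Ioi 0) := by
      intro t ht
      have hda : deriv (fun u => s * φ u) t = s * deriv φ t :=
        ((hφB1.2.1 t ht).hasDerivAt.const_mul s).deriv
      simp only []
      rw [hda]
      ring
    simp only [GLF]
    rw [setIntegral_congr_fun measurableSet_Ioi hEq,
      split5 iN i_φ4 hφB1.2.2.1 hφB1.2.2.1 hφB1.2.2.1 (s^2) (lam/2*s^4) (-(lam*s^2)) 0 0]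
    ring
  set δ : ℝ := lam * (∫ t in Ioi (0:ℝ), (φ t) ^ 2)
    - (∫ t in Ioi (0:ℝ), ((deriv φ t) ^ 2 + (t - ξ) ^ 2 * (φ t) ^ 2)) with hδdef
  have hδ : 0 < δ := by rw [hδdef]; linarith
  set K4 : ℝ := ∫ t in Ioi (0:ℝ), (φ t ^ 2 * φ t ^ 2) with hK4def
  have hu0 : 0 < min 1 (δ / (lam / 2 * K4 + 1)) := by
    apply lt_min one_pos
    have : 0 < lam / 2 * K4 + 1 := by positivity
    positivity
  set u : ℝ := min 1 (δ / (lam / 2 * K4 + 1)) with hu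
  have hu1 : u ≤ δ / (lam / 2 * K4 + 1) := min_le_right _ _
  have hden : 0 < lam / 2 * K4 + 1 := by positivity
  have huK : u * (lam / 2 * K4 + 1) ≤ δ := by
    rw [← le_div_iff₀ hden]
    exact hu1
  set s : ℝ := Real.sqrt u with hs
  have hs2 : s^2 = u := Real.sq_sqrt hu0.le
  have hneg : GLF ξ lam (fun t => s * φ t) < 0 := by
    rw [key s]
    have e1 : s^2 * (∫ t in Ioi (0:ℝ), ((deriv φ t) ^ 2 + (t - ξ) ^ 2 * (φ t) ^ 2))
        + lam / 2 * s^4 * K4 - lam * s^2 * (∫ t in Ioi (0:ℝ), (φ t) ^ 2)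
        = -(u * δ) + lam / 2 * u^2 * K4 := by
      rw [show s^4 = (s^2)^2 by ring, hs2, hδdef]
      ring
    rw [e1]
    have h6 : lam / 2 * u * K4 + u ≤ δ := by nlinarith [huK]
    nlinarith [mul_le_mul_of_nonneg_left h6 hu0.le, mul_pos hu0 hu0]
  have := hminf ξ (fun t => s * φ t) (memB1_smul hφB1 s)
  rw [hGLF0] at this
  linarith

lemma pos_comb {F W a b : ℝ} (hF : 0 < F) (hW : 0 < W) (hab : ¬(a = 0 ∧ b = 0)) :
    0 < a^2 * F + b^2 * W := by
  rcases not_and_or.mp hab with ha | hb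
  · have h1 : 0 < |a| := abs_pos.mpr ha
    nlinarith [sq_abs a, sq_nonneg b, mul_pos (mul_pos h1 h1) hF,
      mul_nonneg (sq_nonneg b) hW.le]
  · have h1 : 0 < |b| := abs_pos.mpr hb
    nlinarith [sq_abs b, sq_nonneg a, mul_pos (mul_pos h1 h1) hW,
      mul_nonneg (sq_nonneg a) hF.le]


end TempleProof

open TempleProof

set_option maxHeartbeats 2000000

/-- Temple-inequality lower bound for `λ₁(ν)`. -/
theorem temple_lower_bound (lam ζ : ℝ) (f : ℝ → ℝ)
    (hlam0 : Theta0 < lam) (hlam1 : lam ≤ 1)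
    (hmin : IsGlobalMin lam ζ f) (hfpos : ∀ t : ℝ, 0 ≤ t → 0 ≤ f t)
    (ν : ℝ) (hν : lam + (ν - ζ) ^ 2 < lam2 lam f ν) :
    lam + (ν - ζ) ^ 2 *
      (1 - 4 * (∫ t in Ioi (0:ℝ), (t - ζ) ^ 2 * (f t) ^ 2) /
        ((lam2 lam f ν - lam - (ν - ζ) ^ 2) * ∫ t in Ioi (0:ℝ), (f t) ^ 2)) ≤
      lam1 lam f ν := by
  have hf : MemB1 f := hmin.1
  have hlampos : 0 < lam := lt_of_le_of_lt theta0_nonneg hlam0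
  have hF : 0 < ∫ t in Ioi (0:ℝ), f t ^ 2 := Fpos hlam0 hmin
  have hJ : ∫ t in Ioi (0:ℝ), ((t - ζ) * f t ^ 2) = 0 := Jzero hmin
  have hGpos : 0 < lam2 lam f ν - lam - (ν - ζ) ^ 2 := by linarith
  have hI0 : 0 ≤ ∫ t in Ioi (0:ℝ), (t - ζ) ^ 2 * (f t) ^ 2 :=
    setIntegral_nonneg measurableSet_Ioi fun t _ => by positivity
  have hne1 : Set.Nonempty {r | ∃ φ, MemB1 φ ∧ (0 < ∫ t in Ioi (0:ℝ), (φ t) ^ 2)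
      ∧ r = RQf lam f ν φ} :=
    ⟨RQf lam f ν (fun t => rexp (-t)), fun t => rexp (-t), memB1_exp, exp_sq_pos, rfl⟩
  apply le_csInf hne1
  rintro r ⟨φ, hφ, hφpos, rfl⟩
  -- decompose φ = c f + w
  set c : ℝ := (∫ t in Ioi (0:ℝ), f t * φ t) / (∫ t in Ioi (0:ℝ), f t ^ 2) with hcdef
  set w : ℝ → ℝ := fun t => φ t - c * f t with hwdef
  have hw : MemB1 w := memB1_transport (memB1_comb hφ hf 1 (-c)) (fun t => by
    simp only [hwdef]; ring)
  -- bounds and measurability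
  obtain ⟨Cf, hCf0, hCf⟩ := bounded hf
  have hCf' : ∀ t ∈ Ioi (0:ℝ), |f t ^ 2| ≤ Cf := fun t ht => by
    rw [abs_of_nonneg (sq_nonneg _)]; exact hCf t ht
  have hfm := aesm hf
  have hwm := aesm hw
  have htfmζ : AEStronglyMeasurable (fun t => (t - ζ) * f t) (volume.restrict (Ioi 0)) :=
    ((continuousOn_id.sub continuousOn_const).mul (contOn hf)).aestronglyMeasurable
      measurableSet_Ioi
  have htfmν : AEStronglyMeasurable (fun t => (t - ν) * f t) (volume.restrict (Ioi 0)) :=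
    ((continuousOn_id.sub continuousOn_const).mul (contOn hf)).aestronglyMeasurable
      measurableSet_Ioi
  have htwmν : AEStronglyMeasurable (fun t => (t - ν) * w t) (volume.restrict (Ioi 0)) :=
    ((continuousOn_id.sub continuousOn_const).mul (contOn hw)).aestronglyMeasurable
      measurableSet_Ioi
  -- integrable products
  have i_fφ : IntegrableOn (fun t => f t * φ t) (Ioi 0) volume :=
    int_mul_of_sq hf.2.2.1 hφ.2.2.1 hfm (aesm hφ)
  have i_fw : IntegrableOn (fun t => f t * w t) (Ioi 0) volume :=
    int_mul_of_sq hf.2.2.1 hw.2.2.1 hfm hwm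
  have i_dfdw : IntegrableOn (fun t => deriv f t * deriv w t) (Ioi 0) volume :=
    int_mul_of_sq hf.2.2.2.1 hw.2.2.2.1 (deriv_aesm f) (deriv_aesm w)
  have i_tftwν : IntegrableOn (fun t => ((t - ν) * f t) * ((t - ν) * w t)) (Ioi 0) volume :=
    int_mul_of_sq (weight_sq hf ν) (weight_sq hw ν) htfmν htwmν
  have i_f3w : IntegrableOn (fun t => f t ^ 2 * (f t * w t)) (Ioi 0) volume :=
    int_bdd_mul hCf' i_fw ((((contOn hf).pow 2).mul
      ((contOn hf).mul (contOn hw))).aestronglyMeasurable measurableSet_Ioi)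
  have i_f4 : IntegrableOn (fun t => f t ^ 2 * f t ^ 2) (Ioi 0) volume :=
    int_bdd_mul hCf' hf.2.2.1 ((((contOn hf).pow 2).mul
      ((contOn hf).pow 2)).aestronglyMeasurable measurableSet_Ioi)
  have i_f2w2 : IntegrableOn (fun t => f t ^ 2 * w t ^ 2) (Ioi 0) volume :=
    int_bdd_mul hCf' hw.2.2.1 ((((contOn hf).pow 2).mul
      ((contOn hw).pow 2)).aestronglyMeasurable measurableSet_Ioi)
  have i_tf2 : IntegrableOn (fun t => (t - ζ) * f t ^ 2) (Ioi 0) volume :=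
    intOn_congr (int_mul_of_sq (weight_sq hf ζ) hf.2.2.1 htfmζ hfm) (fun t => by ring)
  have i_tfw : IntegrableOn (fun t => ((t - ζ) * f t) * w t) (Ioi 0) volume :=
    int_mul_of_sq (weight_sq hf ζ) hw.2.2.1 htfmζ hwm
  -- orthogonality
  have hfw0 : ∫ t in Ioi (0:ℝ), (f t * w t) = 0 := by
    have hEq : EqOn (fun t => f t * w t)
        (fun t => 1 * (f t * φ t) + (-c) * (f t ^ 2) + 0 * (f t ^ 2) + 0 * (f t ^ 2)
          + 0 * (f t ^ 2)) (Ioi 0) := by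
      intro t _
      simp only [hwdef]
      ring
    rw [setIntegral_congr_fun measurableSet_Ioi hEq,
      split5 i_fφ hf.2.2.1 hf.2.2.1 hf.2.2.1 hf.2.2.1 1 (-c) 0 0 0]
    have hc : c * (∫ t in Ioi (0:ℝ), f t ^ 2) = ∫ t in Ioi (0:ℝ), f t * φ t := by
      rw [hcdef]; exact div_mul_cancel₀ _ hF.ne'
    nlinarith [hc]
  set W : ℝ := ∫ t in Ioi (0:ℝ), w t ^ 2 with hWdef
  have hW0 : 0 ≤ W := setIntegral_nonneg measurableSet_Ioi fun t _ => sq_nonneg _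
  -- derivative facts
  have hdw : ∀ t ∈ Ioi (0:ℝ), deriv w t = deriv φ t - c * deriv f t := by
    intro t ht
    simp only [hwdef]
    exact ((hφ.2.1 t ht).hasDerivAt.sub ((hf.2.1 t ht).hasDerivAt.const_mul c)).deriv
  have hφval : ∀ t, φ t = c * f t + w t := fun t => by simp only [hwdef]; ring
  -- quadratic form pieces
  have iP1 : IntegrableOn (fun t => deriv f t ^ 2 + (t - ν) ^ 2 * f t ^ 2
      + lam * f t ^ 2 * (f t ^ 2)) (Ioi 0) volume := by
    have h1 : IntegrableOn (fun t => (t - ν) ^ 2 * f t ^ 2) (Ioi 0) volume :=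
      intOn_congr (weight_sq hf ν) (fun t => by ring)
    have h2 : IntegrableOn (fun t => lam * f t ^ 2 * (f t ^ 2)) (Ioi 0) volume :=
      intOn_congr (i_f4.const_mul lam) (fun t => by ring)
    exact (hf.2.2.2.1.add h1).add h2
  have iP2 : IntegrableOn (fun t => deriv f t * deriv w t + (t - ν) ^ 2 * (f t * w t)
      + lam * f t ^ 2 * (f t * w t)) (Ioi 0) volume := by
    have h1 : IntegrableOn (fun t => (t - ν) ^ 2 * (f t * w t)) (Ioi 0) volume :=
      intOn_congr i_tftwν (fun t => by ring)
    have h2 : IntegrableOn (fun t => lam * f t ^ 2 * (f t * w t)) (Ioi 0) volume :=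
      intOn_congr (i_f3w.const_mul lam) (fun t => by ring)
    exact (i_dfdw.add h1).add h2
  have iP3 : IntegrableOn (fun t => deriv w t ^ 2 + (t - ν) ^ 2 * w t ^ 2
      + lam * f t ^ 2 * (w t ^ 2)) (Ioi 0) volume := by
    have h1 : IntegrableOn (fun t => (t - ν) ^ 2 * w t ^ 2) (Ioi 0) volume :=
      intOn_congr (weight_sq hw ν) (fun t => by ring)
    have h2 : IntegrableOn (fun t => lam * f t ^ 2 * (w t ^ 2)) (Ioi 0) volume :=
      intOn_congr (i_f2w2.const_mul lam) (fun t => by ring)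
    exact (hw.2.2.2.1.add h1).add h2
  set q1 : ℝ := ∫ t in Ioi (0:ℝ), (deriv f t ^ 2 + (t - ν) ^ 2 * f t ^ 2
      + lam * f t ^ 2 * (f t ^ 2)) with hq1def
  set q2 : ℝ := ∫ t in Ioi (0:ℝ), (deriv f t * deriv w t + (t - ν) ^ 2 * (f t * w t)
      + lam * f t ^ 2 * (f t * w t)) with hq2def
  set q3 : ℝ := ∫ t in Ioi (0:ℝ), (deriv w t ^ 2 + (t - ν) ^ 2 * w t ^ 2
      + lam * f t ^ 2 * (w t ^ 2)) with hq3def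
  -- splitting of numerators and denominators
  have hnum : ∀ a b : ℝ, (∫ t in Ioi (0:ℝ), (deriv (fun t => a * f t + b * w t) t ^ 2
      + (t - ν) ^ 2 * (a * f t + b * w t) ^ 2
      + lam * f t ^ 2 * (a * f t + b * w t) ^ 2))
      = a^2 * q1 + 2*a*b * q2 + b^2 * q3 := by
    intro a b
    have hEq : EqOn (fun t => deriv (fun t => a * f t + b * w t) t ^ 2
        + (t - ν) ^ 2 * (a * f t + b * w t) ^ 2
        + lam * f t ^ 2 * (a * f t + b * w t) ^ 2)
        (fun t => (a^2) * (deriv f t ^ 2 + (t - ν) ^ 2 * f t ^ 2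
            + lam * f t ^ 2 * (f t ^ 2))
          + (2*a*b) * (deriv f t * deriv w t + (t - ν) ^ 2 * (f t * w t)
            + lam * f t ^ 2 * (f t * w t))
          + (b^2) * (deriv w t ^ 2 + (t - ν) ^ 2 * w t ^ 2 + lam * f t ^ 2 * (w t ^ 2))
          + 0 * (f t ^ 2) + 0 * (f t ^ 2)) (Ioi 0) := by
      intro t ht
      have hdab : deriv (fun s => a * f s + b * w s) t = a * deriv f t + b * deriv w t :=
        (((hf.2.1 t ht).hasDerivAt.const_mul a).add
          ((hw.2.1 t ht).hasDerivAt.const_mul b)).deriv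
      simp only []
      rw [hdab]
      ring
    rw [setIntegral_congr_fun measurableSet_Ioi hEq,
      split5 iP1 iP2 iP3 hf.2.2.1 hf.2.2.1 (a^2) (2*a*b) (b^2) 0 0]
    rw [← hq1def, ← hq2def, ← hq3def]
    ring
  have hden : ∀ a b : ℝ, (∫ t in Ioi (0:ℝ), (a * f t + b * w t) ^ 2)
      = a^2 * (∫ t in Ioi (0:ℝ), f t ^ 2) + b^2 * W := by
    intro a b
    have hEq : EqOn (fun t => (a * f t + b * w t) ^ 2)
        (fun t => (a^2) * (f t ^ 2) + (2*a*b) * (f t * w t) + (b^2) * (w t ^ 2)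
          + 0 * (f t ^ 2) + 0 * (f t ^ 2)) (Ioi 0) := by
      intro t _
      simp only []
      ring
    rw [setIntegral_congr_fun measurableSet_Ioi hEq,
      split5 hf.2.2.1 i_fw hw.2.2.1 hf.2.2.1 hf.2.2.1 (a^2) (2*a*b) (b^2) 0 0, hfw0,
      ← hWdef]
    ring
  have hnumφ : (∫ t in Ioi (0:ℝ), (deriv φ t ^ 2 + (t - ν) ^ 2 * φ t ^ 2
      + lam * f t ^ 2 * φ t ^ 2)) = c^2 * q1 + 2*c * q2 + q3 := by
    have hEq : EqOn (fun t => deriv φ t ^ 2 + (t - ν) ^ 2 * φ t ^ 2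
        + lam * f t ^ 2 * φ t ^ 2)
        (fun t => (c^2) * (deriv f t ^ 2 + (t - ν) ^ 2 * f t ^ 2
            + lam * f t ^ 2 * (f t ^ 2))
          + (2*c) * (deriv f t * deriv w t + (t - ν) ^ 2 * (f t * w t)
            + lam * f t ^ 2 * (f t * w t))
          + 1 * (deriv w t ^ 2 + (t - ν) ^ 2 * w t ^ 2 + lam * f t ^ 2 * (w t ^ 2))
          + 0 * (f t ^ 2) + 0 * (f t ^ 2)) (Ioi 0) := by
      intro t ht
      have h1 : deriv φ t = c * deriv f t + deriv w t := by
        have := hdw t ht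
        linarith
      simp only []
      rw [h1, hφval t]
      ring
    rw [setIntegral_congr_fun measurableSet_Ioi hEq,
      split5 iP1 iP2 iP3 hf.2.2.1 hf.2.2.1 (c^2) (2*c) 1 0 0]
    rw [← hq1def, ← hq2def, ← hq3def]
    ring
  have hdenφ : (∫ t in Ioi (0:ℝ), φ t ^ 2)
      = c^2 * (∫ t in Ioi (0:ℝ), f t ^ 2) + W := by
    have hEq : EqOn (fun t => φ t ^ 2)
        (fun t => (c^2) * (f t ^ 2) + (2*c) * (f t * w t) + 1 * (w t ^ 2)
          + 0 * (f t ^ 2) + 0 * (f t ^ 2)) (Ioi 0) := by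
      intro t _
      simp only []
      rw [hφval t]
      ring
    rw [setIntegral_congr_fun measurableSet_Ioi hEq,
      split5 hf.2.2.1 i_fw hw.2.2.1 hf.2.2.1 hf.2.2.1 (c^2) (2*c) 1 0 0, hfw0, ← hWdef]
    ring
  -- q1 and q2 via Euler-Lagrange
  have iELf : IntegrableOn (fun t => deriv f t * deriv f t + (t - ζ)^2 * (f t * f t)
      + lam * (f t ^ 3 * f t) - lam * (f t * f t)) (Ioi 0) volume := by
    have h1 : IntegrableOn (fun t => deriv f t * deriv f t) (Ioi 0) volume :=
      intOn_congr hf.2.2.2.1 (fun t => by ring)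
    have h2 : IntegrableOn (fun t => (t - ζ)^2 * (f t * f t)) (Ioi 0) volume :=
      intOn_congr (weight_sq hf ζ) (fun t => by ring)
    have h3 : IntegrableOn (fun t => lam * (f t ^ 3 * f t)) (Ioi 0) volume :=
      intOn_congr (i_f4.const_mul lam) (fun t => by ring)
    have h4 : IntegrableOn (fun t => lam * (f t * f t)) (Ioi 0) volume :=
      intOn_congr (hf.2.2.1.const_mul lam) (fun t => by ring)
    exact ((h1.add h2).add h3).sub h4
  have iELw : IntegrableOn (fun t => deriv f t * deriv w t + (t - ζ)^2 * (f t * w t)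
      + lam * (f t ^ 3 * w t) - lam * (f t * w t)) (Ioi 0) volume := by
    have h2 : IntegrableOn (fun t => (t - ζ)^2 * (f t * w t)) (Ioi 0) volume := by
      have := int_mul_of_sq (weight_sq hf ζ) (weight_sq hw ζ) htfmζ
        (((continuousOn_id.sub continuousOn_const).mul (contOn hw)).aestronglyMeasurable
          measurableSet_Ioi)
      exact intOn_congr this (fun t => by ring)
    have h3 : IntegrableOn (fun t => lam * (f t ^ 3 * w t)) (Ioi 0) volume :=
      intOn_congr (i_f3w.const_mul lam) (fun t => by ring)
    have h4 : IntegrableOn (fun t => lam * (f t * w t)) (Ioi 0) volume :=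
      i_fw.const_mul lam
    exact ((i_dfdw.add h2).add h3).sub h4
  have hELf := euler_lagrange hmin hf
  have hELw := euler_lagrange hmin hw
  have hq1 : q1 = (lam + (ν - ζ)^2) * (∫ t in Ioi (0:ℝ), f t ^ 2) := by
    rw [hq1def]
    have hEq : EqOn (fun t => deriv f t ^ 2 + (t - ν) ^ 2 * f t ^ 2
        + lam * f t ^ 2 * (f t ^ 2))
        (fun t => 1 * (deriv f t * deriv f t + (t - ζ)^2 * (f t * f t)
            + lam * (f t ^ 3 * f t) - lam * (f t * f t))
          + lam * (f t ^ 2) + ((ν - ζ)^2) * (f t ^ 2)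
          + (-2*(ν - ζ)) * ((t - ζ) * f t ^ 2) + 0 * (f t ^ 2)) (Ioi 0) := by
      intro t _
      simp only []
      ring
    rw [setIntegral_congr_fun measurableSet_Ioi hEq,
      split5 iELf hf.2.2.1 hf.2.2.1 i_tf2 hf.2.2.1 1 lam ((ν - ζ)^2) (-2*(ν - ζ)) 0,
      hELf, hJ]
    ring
  have hq2 : q2 = -2*(ν - ζ) * (∫ t in Ioi (0:ℝ), (((t - ζ) * f t) * w t)) := by
    rw [hq2def]
    have hEq : EqOn (fun t => deriv f t * deriv w t + (t - ν) ^ 2 * (f t * w t)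
        + lam * f t ^ 2 * (f t * w t))
        (fun t => 1 * (deriv f t * deriv w t + (t - ζ)^2 * (f t * w t)
            + lam * (f t ^ 3 * w t) - lam * (f t * w t))
          + lam * (f t * w t) + ((ν - ζ)^2) * (f t * w t)
          + (-2*(ν - ζ)) * (((t - ζ) * f t) * w t) + 0 * (f t ^ 2)) (Ioi 0) := by
      intro t _
      simp only []
      ring
    rw [setIntegral_congr_fun measurableSet_Ioi hEq,
      split5 iELw i_fw i_fw i_tfw hf.2.2.1 1 lam ((ν - ζ)^2) (-2*(ν - ζ)) 0,
      hELw, hfw0]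
    ring
  -- Cauchy-Schwarz
  have hCS : (∫ t in Ioi (0:ℝ), (((t - ζ) * f t) * w t))^2
      ≤ (∫ t in Ioi (0:ℝ), ((t - ζ) * f t)^2) * W :=
    cs (weight_sq hf ζ) hw.2.2.1 i_tfw
  have hII : (∫ t in Ioi (0:ℝ), ((t - ζ) * f t)^2)
      = ∫ t in Ioi (0:ℝ), (t - ζ) ^ 2 * (f t) ^ 2 :=
    setIntegral_congr_fun measurableSet_Ioi (fun t _ => by ring)
  rcases eq_or_lt_of_le hW0 with hWz | hWpos
  · -- w vanishes: Rayleigh quotient is exactly η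
    have hWz' : ∫ t in Ioi (0:ℝ), w t ^ 2 = 0 := by rw [← hWdef]; exact hWz.symm
    have hw0 : ∀ t ∈ Ioi (0:ℝ), w t = 0 := zero_on_Ioi hw.2.1 hw.2.2.1 hWz'
    have hdw0 : ∀ t ∈ Ioi (0:ℝ), deriv w t = 0 := by
      intro t ht
      have hev : w =ᶠ[nhds t] (fun _ => (0:ℝ)) := by
        filter_upwards [isOpen_Ioi.mem_nhds ht] with s hs using hw0 s hs
      rw [Filter.EventuallyEq.deriv_eq hev]
      exact deriv_const t 0
    have hq2z : q2 = 0 := by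
      rw [hq2def]
      have hEq : EqOn (fun t => deriv f t * deriv w t + (t - ν) ^ 2 * (f t * w t)
          + lam * f t ^ 2 * (f t * w t)) (fun _ => (0:ℝ)) (Ioi 0) := by
        intro t ht
        simp only []
        rw [hw0 t ht, hdw0 t ht]
        ring
      rw [setIntegral_congr_fun measurableSet_Ioi hEq, integral_zero]
    have hq3z : q3 = 0 := by
      rw [hq3def]
      have hEq : EqOn (fun t => deriv w t ^ 2 + (t - ν) ^ 2 * w t ^ 2
          + lam * f t ^ 2 * (w t ^ 2)) (fun _ => (0:ℝ)) (Ioi 0) := by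
        intro t ht
        simp only []
        rw [hw0 t ht, hdw0 t ht]
        ring
      rw [setIntegral_congr_fun measurableSet_Ioi hEq, integral_zero]
    have hRQ : RQf lam f ν φ = lam + (ν - ζ)^2 := by
      have hden' : (∫ t in Ioi (0:ℝ), φ t ^ 2) = c^2 * (∫ t in Ioi (0:ℝ), f t ^ 2) := by
        rw [hdenφ, ← hWz]
        ring
      have hc2F : 0 < c^2 * (∫ t in Ioi (0:ℝ), f t ^ 2) := hden' ▸ hφpos
      have hcne : c ≠ 0 := by
        intro h0
        rw [h0] at hc2F
        norm_num at hc2F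
      simp only [RQf]
      rw [hnumφ, hden', hq1, hq2z, hq3z]
      field_simp
      ring
    rw [hRQ]
    have hdivnn : 0 ≤ 4 * (∫ t in Ioi (0:ℝ), (t - ζ) ^ 2 * (f t) ^ 2) /
        ((lam2 lam f ν - lam - (ν - ζ) ^ 2) * ∫ t in Ioi (0:ℝ), (f t) ^ 2) :=
      div_nonneg (by linarith) (mul_nonneg hGpos.le (by linarith))
    nlinarith [sq_nonneg (ν - ζ), hdivnn, mul_nonneg (sq_nonneg (ν - ζ)) hdivnn]
  · -- main case
    have hbdd : BddBelow {r | ∃ u v : ℝ → ℝ, MemB1 u ∧ MemB1 v ∧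
        (∀ a b : ℝ, ¬(a = 0 ∧ b = 0) →
          0 < ∫ t in Ioi (0:ℝ), (a * u t + b * v t) ^ 2) ∧
        r = sSup {s | ∃ a b : ℝ, ¬(a = 0 ∧ b = 0) ∧
          s = RQf lam f ν (fun t => a * u t + b * v t)}} := by
      refine ⟨0, ?_⟩
      rintro r ⟨u, v, hu, hv, hpos, rfl⟩
      apply Real.sSup_nonneg
      rintro s ⟨a, b, hab, rfl⟩
      exact RQf_nonneg hlampos.le f ν _
    have hposcombo : ∀ a b : ℝ, ¬(a = 0 ∧ b = 0) →
        0 < ∫ t in Ioi (0:ℝ), (a * f t + b * w t) ^ 2 := by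
      intro a b hab
      rw [hden a b]
      exact pos_comb hF hWpos hab
    have hle2 : lam2 lam f ν ≤ sSup {s | ∃ a b : ℝ, ¬(a = 0 ∧ b = 0) ∧
        s = RQf lam f ν (fun t => a * f t + b * w t)} :=
      csInf_le hbdd ⟨f, w, hf, hw, hposcombo, rfl⟩
    have hSne : Set.Nonempty {s | ∃ a b : ℝ, ¬(a = 0 ∧ b = 0) ∧
        s = RQf lam f ν (fun t => a * f t + b * w t)} :=
      ⟨RQf lam f ν (fun t => 1 * f t + 0 * w t), 1, 0, by norm_num, rfl⟩
    have hquad : ∀ ε : ℝ, 0 < ε → ε < lam2 lam f ν - lam - (ν - ζ) ^ 2 →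
        (lam + (ν - ζ)^2) - (q2^2 / ((∫ t in Ioi (0:ℝ), f t ^ 2) * W)) /
          ((lam2 lam f ν - lam - (ν - ζ) ^ 2) - ε) ≤ RQf lam f ν φ := by
      intro ε hε0 hεG
      have h1 : lam2 lam f ν - ε < sSup {s | ∃ a b : ℝ, ¬(a = 0 ∧ b = 0) ∧
          s = RQf lam f ν (fun t => a * f t + b * w t)} := by
        linarith [hle2]
      obtain ⟨rr, ⟨a, b, hab, rfl⟩, hrr⟩ := exists_lt_of_lt_csSup hSne h1
      have hr2 : lam2 lam f ν - ε ≤ (a^2 * ((lam + (ν - ζ)^2)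
          * (∫ t in Ioi (0:ℝ), f t ^ 2)) + 2*a*b*q2 + b^2 * q3)
          / (a^2 * (∫ t in Ioi (0:ℝ), f t ^ 2) + b^2 * W) := by
        have e := hrr
        simp only [RQf] at e
        rw [hnum a b, hden a b, hq1] at e
        linarith [e]
      have halg := temple_alg (c := c) hF hWpos
        (show lam + (ν - ζ)^2 < lam2 lam f ν - ε by linarith) hab hr2
      have hRQφ : RQf lam f ν φ = (c^2 * ((lam + (ν - ζ)^2)
          * (∫ t in Ioi (0:ℝ), f t ^ 2)) + 2*c*q2 + q3)
          / (c^2 * (∫ t in Ioi (0:ℝ), f t ^ 2) + W) := by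
        simp only [RQf]
        rw [hnumφ, hdenφ, hq1]
      rw [hRQφ]
      have hdd : (q2^2 / ((∫ t in Ioi (0:ℝ), f t ^ 2) * W)) /
          ((lam2 lam f ν - lam - (ν - ζ) ^ 2) - ε)
          = q2^2 / ((lam2 lam f ν - ε - (lam + (ν - ζ)^2))
            * ((∫ t in Ioi (0:ℝ), f t ^ 2) * W)) := by
        rw [div_div]
        congr 1
        ring
      rw [hdd]
      exact halg
    have hmain := eps_to_zero hGpos (by positivity) hquad
    -- finish with Cauchy-Schwarz
    have hq2sq : q2^2 ≤ 4*(ν - ζ)^2 * ((∫ t in Ioi (0:ℝ), (t - ζ) ^ 2 * (f t) ^ 2) * W) := by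
      rw [hq2]
      rw [hII] at hCS
      nlinarith [hCS, mul_le_mul_of_nonneg_left hCS
        (by positivity : (0:ℝ) ≤ 4*(ν - ζ)^2)]
    have hPle : q2^2 / ((∫ t in Ioi (0:ℝ), f t ^ 2) * W)
        ≤ 4*(ν - ζ)^2 * (∫ t in Ioi (0:ℝ), (t - ζ) ^ 2 * (f t) ^ 2)
          / (∫ t in Ioi (0:ℝ), f t ^ 2) := by
      rw [div_le_div_iff₀ (by positivity) hF]
      nlinarith [hq2sq, hF, hWpos, mul_le_mul_of_nonneg_right hq2sq hF.le]
    have h7 : (q2^2 / ((∫ t in Ioi (0:ℝ), f t ^ 2) * W)) /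
        (lam2 lam f ν - lam - (ν - ζ) ^ 2)
        ≤ (4*(ν - ζ)^2 * (∫ t in Ioi (0:ℝ), (t - ζ) ^ 2 * (f t) ^ 2)
          / (∫ t in Ioi (0:ℝ), f t ^ 2)) / (lam2 lam f ν - lam - (ν - ζ) ^ 2) :=
      by gcongr
    have h8 : lam + (ν - ζ) ^ 2 *
        (1 - 4 * (∫ t in Ioi (0:ℝ), (t - ζ) ^ 2 * (f t) ^ 2) /
          ((lam2 lam f ν - lam - (ν - ζ) ^ 2) * ∫ t in Ioi (0:ℝ), (f t) ^ 2))
        = (lam + (ν - ζ)^2) - (4*(ν - ζ)^2 * (∫ t in Ioi (0:ℝ), (t - ζ) ^ 2 * (f t) ^ 2)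
          / (∫ t in Ioi (0:ℝ), f t ^ 2)) / (lam2 lam f ν - lam - (ν - ζ) ^ 2) := by
      field_simp
      ring
    rw [h8]
    linarith [hmain, h7]
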